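/- For the 2k×2k matrix F_{2k} = [[A_k, B_k],[(−1)^k·B_k, A_k]] built from parameters a, b: det(F_{2k}) equals the determinant of the k×k matrix A_k² − (−1)^k·B_k², which equals det of the k×k symmetric pentadiagonal-type matrix T_k with diagonal entries (−a²+b², −2a²+b², ..., −2a²+b², −a²+b²) and entries a² at positions (i, i+2) and (i+2, i). -/

import Mathlib

open Polynomial Matrix

private lemma sum_ite_unique {K : Type*} [AddCommMonoid K] {k : ℕ} (c : ℕ)
    (h : Fin k → K) (C : Fin k → Prop) [DecidablePred C] (hC : ∀ r, C r ↔ r.1 = c) :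
    (∑ r : Fin k, if C r then h r else 0) = if hc : c < k then h ⟨c, hc⟩ else 0 := by
  split_ifs with hc
  · rw [Finset.sum_eq_single ⟨c, hc⟩]
    · rw [if_pos ((hC _).mpr rfl)]
    · intro b _ hb
      rw [if_neg]
      intro hcb
      exact hb (Fin.ext ((hC b).mp hcb))
    · intro habs; exact absurd (Finset.mem_univ _) habs
  · apply Finset.sum_eq_zero
    intro r _
    rw [if_neg]
    intro hr
    exact hc (((hC r).mp hr) ▸ r.2)

private theorem det_fromBlocks_comm {n : Type*} [Fintype n] [DecidableEq n] {K : Type*} [Field K]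
    (A B C D : Matrix n n K) (h : C * D = D * C) :
    (Matrix.fromBlocks A B C D).det = (A * D - B * C).det := by
  classical
  set ψ : K →+* Polynomial K := Polynomial.C with hψ
  set Dt : Matrix n n (Polynomial K) := (Polynomial.X : Polynomial K) • (1 : Matrix n n (Polynomial K)) + ψ.mapMatrix D with hDtdef
  have hDt : Dt = charmatrix (-D) := by
    ext i j
    by_cases hij : i = j
    · subst hij
      simp [hDtdef, charmatrix_apply, Matrix.one_apply, mul_ite, sub_eq_add_neg, hψ]
    · simp [hDtdef, charmatrix_apply, Matrix.one_apply, Matrix.diagonal_apply, hij, mul_ite,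
        sub_eq_add_neg, hψ]
  have hdet0 : Dt.det ≠ 0 := by
    rw [hDt]
    exact (Matrix.charpoly_monic (-D)).ne_zero
  set F := FractionRing (Polynomial K) with hF
  set φ : Polynomial K →+* F := algebraMap (Polynomial K) F with hφdef
  have hφ : Function.Injective φ := IsFractionRing.injective (Polynomial K) F
  have hunit : IsUnit (φ.mapMatrix Dt).det := by
    rw [← RingHom.map_det]
    exact isUnit_iff_ne_zero.mpr ((map_ne_zero_iff φ hφ).mpr hdet0)
  letI : Invertible (φ.mapMatrix Dt) := Matrix.invertibleOfIsUnitDet _ hunit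
  have hcommt : (ψ.mapMatrix C) * Dt = Dt * (ψ.mapMatrix C) := by
    rw [hDtdef, Matrix.mul_add, Matrix.add_mul, Matrix.mul_smul, Matrix.smul_mul,
      Matrix.mul_one, Matrix.one_mul, ← _root_.map_mul, ← _root_.map_mul, h]
  have hcommF : (φ.mapMatrix (ψ.mapMatrix C)) * (φ.mapMatrix Dt)
      = (φ.mapMatrix Dt) * (φ.mapMatrix (ψ.mapMatrix C)) := by
    rw [← _root_.map_mul, ← _root_.map_mul, hcommt]
  have main : (Matrix.fromBlocks (ψ.mapMatrix A) (ψ.mapMatrix B) (ψ.mapMatrix C) Dt).det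
      = ((ψ.mapMatrix A) * Dt - (ψ.mapMatrix B) * (ψ.mapMatrix C)).det := by
    apply hφ
    rw [RingHom.map_det, RingHom.map_det]
    simp only [RingHom.mapMatrix_apply, Matrix.fromBlocks_map]
    simp only [← RingHom.mapMatrix_apply, _root_.map_sub, _root_.map_mul]
    rw [Matrix.det_fromBlocks₂₂, mul_comm, ← Matrix.det_mul]
    congr 1
    rw [Matrix.sub_mul]
    congr 1
    rw [Matrix.mul_assoc (φ.mapMatrix (ψ.mapMatrix B) * ⅟(φ.mapMatrix Dt)), hcommF,
      Matrix.mul_assoc (φ.mapMatrix (ψ.mapMatrix B)), ← Matrix.mul_assoc (⅟(φ.mapMatrix Dt)),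
      invOf_mul_self, Matrix.one_mul]
  -- evaluate at 0
  set e : Polynomial K →+* K := Polynomial.evalRingHom 0 with he
  have hAe : ∀ M : Matrix n n K, e.mapMatrix (ψ.mapMatrix M) = M := by
    intro M
    ext i j
    simp [RingHom.mapMatrix_apply, Matrix.map_apply, hψ, he]
  have hDe : e.mapMatrix Dt = D := by
    ext i j
    simp [hDtdef, RingHom.mapMatrix_apply, Matrix.map_apply, Matrix.add_apply, Matrix.smul_apply,
      hψ, he, smul_eq_mul]
  have final := congrArg e main
  rw [RingHom.map_det, RingHom.map_det] at final
  simp only [RingHom.mapMatrix_apply, Matrix.fromBlocks_map] at final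
  simp only [← RingHom.mapMatrix_apply, _root_.map_sub, _root_.map_mul] at final
  rw [hAe, hAe, hAe, hDe] at final
  exact final

/-- For `k ≥ 2` and `F_{2k} = [[A_k, B_k], [(-1)^k B_k, A_k]]`:
`det F_{2k} = det (A_k² - (-1)^k B_k²)`, and this equals the determinant of the `k × k`
matrix `T_k` with diagonal `(-a²+b², -2a²+b², …, -2a²+b², -a²+b²)` and entries `a²`
at positions `(i, i+2)` and `(i+2, i)`. -/
theorem stmt10 {K : Type*} [Field K] (a b : K) (k : ℕ) (hk : 2 ≤ k)
    (A B : Matrix (Fin k) (Fin k) K)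
    (hA : ∀ p q : Fin k, A p q =
      if q.1 = p.1 + 1 then a else if p.1 = q.1 + 1 then -a else 0)
    (hB : ∀ p q : Fin k, B p q =
      if p.1 + q.1 + 1 = k then (-1 : K) ^ p.1 * b else 0)
    (T : Matrix (Fin k) (Fin k) K)
    (hT : ∀ p q : Fin k, T p q =
      if p.1 = q.1 then
        (if p.1 = 0 ∨ p.1 = k - 1 then -a ^ 2 + b ^ 2 else -2 * a ^ 2 + b ^ 2)
      else if q.1 = p.1 + 2 ∨ p.1 = q.1 + 2 then a ^ 2
      else 0) :
    (Matrix.fromBlocks A B (((-1 : K) ^ k) • B) A).det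
        = (A * A - ((-1 : K) ^ k) • (B * B)).det ∧
      (Matrix.fromBlocks A B (((-1 : K) ^ k) • B) A).det = T.det := by
  -- A and B commute
  have hAB : A * B = B * A := by
    ext p q
    have hp := p.2
    have hq := q.2
    rw [Matrix.mul_apply, Matrix.mul_apply]
    have l1 : ∑ r, A p r * B r q
        = ∑ r : Fin k, if r.1 + q.1 + 1 = k then A p r * ((-1 : K) ^ r.1 * b) else 0 :=
      Finset.sum_congr rfl (fun r _ => by rw [hB]; split_ifs <;> simp)
    have l2 : ∑ r, B p r * A r q
        = ∑ r : Fin k, if p.1 + r.1 + 1 = k then ((-1 : K) ^ p.1 * b) * A r q else 0 :=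
      Finset.sum_congr rfl (fun r _ => by rw [hB]; split_ifs <;> simp)
    rw [l1, l2,
      sum_ite_unique (k - 1 - q.1) (fun r => A p r * ((-1 : K) ^ r.1 * b)) _
        (fun r => by have := r.2; omega),
      sum_ite_unique (k - 1 - p.1) (fun r => ((-1 : K) ^ p.1 * b) * A r q) _
        (fun r => by have := r.2; omega),
      dif_pos (show k - 1 - q.1 < k by omega), dif_pos (show k - 1 - p.1 < k by omega)]
    rw [hA, hA]
    simp only [Fin.val_mk]
    split_ifs with h1 h2 h3 h4 h5 h6 <;>
      first
        | omega
        | ring1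
        | (rw [h1, pow_succ]; ring1)
        | (rw [h2, pow_succ]; ring1)
        | (rw [h3, pow_succ]; ring1)
        | (rw [h4, pow_succ]; ring1)
  -- entries of A * A
  have hAA : ∀ p q : Fin k, (A * A) p q
      = (if h : p.1 + 1 < k then a * A ⟨p.1 + 1, h⟩ q else 0)
        + (if h : 1 ≤ p.1 then
            -a * A ⟨p.1 - 1, lt_of_le_of_lt (Nat.sub_le _ _) p.2⟩ q else 0) := by
    intro p q
    rw [Matrix.mul_apply]
    have step : ∀ r : Fin k, A p r * A r q
        = (if r.1 = p.1 + 1 then a * A r q else 0)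
          + (if r.1 + 1 = p.1 then -a * A r q else 0) := by
      intro r
      rw [hA p r]
      split_ifs <;> first | omega | ring1
    rw [Finset.sum_congr rfl (fun r _ => step r), Finset.sum_add_distrib]
    congr 1
    · simpa using sum_ite_unique (p.1 + 1) (fun r => a * A r q)
        (fun r => r.1 = p.1 + 1) (fun r => Iff.rfl)
    · by_cases hp1 : 1 ≤ p.1
      · rw [sum_ite_unique (p.1 - 1) (fun r => -a * A r q) _
          (fun r => by have := r.2; omega),
          dif_pos (show p.1 - 1 < k from lt_of_le_of_lt (Nat.sub_le _ _) p.2), dif_pos hp1]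
      · rw [dif_neg hp1]
        apply Finset.sum_eq_zero
        intro r _
        rw [if_neg]
        omega
  -- entries of B * B
  have hBB : ∀ p q : Fin k, (B * B) p q
      = if p.1 = q.1 then ((-1 : K) ^ p.1 * b) * ((-1 : K) ^ (k - 1 - p.1) * b) else 0 := by
    intro p q
    have hp := p.2
    have hq := q.2
    rw [Matrix.mul_apply]
    have step : ∀ r : Fin k, B p r * B r q
        = if p.1 + r.1 + 1 = k then ((-1 : K) ^ p.1 * b) * B r q else 0 := by
      intro r
      rw [hB p r]
      split_ifs <;> simp
    rw [Finset.sum_congr rfl (fun r _ => step r),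
      sum_ite_unique (k - 1 - p.1) (fun r => ((-1 : K) ^ p.1 * b) * B r q) _
        (fun r => by have := r.2; omega),
      dif_pos (show k - 1 - p.1 < k by omega), hB]
    simp only [Fin.val_mk]
    split_ifs <;> first | omega | ring1 | simp
  -- the matrices A and (-1)^k • B commute, so the block determinant formula applies
  have hcomm : (((-1 : K) ^ k) • B) * A = A * (((-1 : K) ^ k) • B) := by
    rw [Matrix.smul_mul, Matrix.mul_smul, hAB]
  have hdet1 := det_fromBlocks_comm A B (((-1 : K) ^ k) • B) A hcomm
  rw [Matrix.mul_smul] at hdet1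
  refine ⟨hdet1, hdet1.trans ?_⟩
  congr 1
  -- A * A - (-1)^k • (B * B) = T
  ext p q
  have hp := p.2
  have hq := q.2
  have e2 : k + (p.1 + (k - 1 - p.1)) = 2 * k - 1 := by omega
  have e3 : (-1 : K) ^ (2 * k - 1) = -1 := Odd.neg_one_pow ⟨k - 1, by omega⟩
  have key : (-1 : K) ^ k * ((-1 : K) ^ p.1 * b * ((-1 : K) ^ (k - 1 - p.1) * b)) = -b ^ 2 := by
    calc (-1 : K) ^ k * ((-1 : K) ^ p.1 * b * ((-1 : K) ^ (k - 1 - p.1) * b))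
        = (-1 : K) ^ (k + (p.1 + (k - 1 - p.1))) * b ^ 2 := by
          rw [pow_add, pow_add]; ring1
      _ = -b ^ 2 := by rw [e2, e3]; ring1
  rw [Matrix.sub_apply, Matrix.smul_apply, hAA, hBB, hT, smul_eq_mul]
  split_ifs <;> (try simp only [hA, Fin.val_mk]) <;> (try split_ifs) <;>
    first
      | omega
      | ring1
      | linear_combination key
      | linear_combination -key
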